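/- Existence of a replicating strategy for an arbitrary path-dependent payoff (CRR path-dependent pricing): for every payoff map f : Ω → ℝ there exists a predictable self-financing trading strategy whose terminal wealth equals f ω for every ω ∈ Ω and whose initial wealth equals (1+r)^(−T) * ∑_{ω ∈ Ω} f ω * q^(x(ω)) * (1−q)^(T − x(ω)). -/

import Mathlib

open Finset

/-- Stock price at time `t` in the `T`-step CRR binomial model. -/
def crrStock (T : ℕ) (S0 u d : ℝ) (t : ℕ) (ω : Fin T → Bool) : ℝ :=
  S0 * ∏ i ∈ Finset.univ.filter (fun i : Fin T => (i : ℕ) < t),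
    (if ω i then 1 + u else 1 + d)

/-- A trading strategy `(a, b)` is predictable if the holdings chosen at time `t`
depend only on the first `t` coordinates of the trajectory. -/
def crrPredictable {T : ℕ} (a b : Fin T → (Fin T → Bool) → ℝ) : Prop :=
  ∀ (t : Fin T) (ω ω' : Fin T → Bool),
    (∀ i : Fin T, (i : ℕ) < (t : ℕ) → ω i = ω' i) →
      a t ω = a t ω' ∧ b t ω = b t ω'

/-- Self-financing condition for the strategy `(a, b)`. -/
def crrSelfFinancing {T : ℕ} (S0 u d r : ℝ) (a b : Fin T → (Fin T → Bool) → ℝ) : Prop :=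
  ∀ (t : ℕ) (ht : t + 1 < T) (ω : Fin T → Bool),
    a ⟨t, by omega⟩ ω * crrStock T S0 u d (t + 1) ω + b ⟨t, by omega⟩ ω * (1 + r) ^ (t + 1)
      = a ⟨t + 1, ht⟩ ω * crrStock T S0 u d (t + 1) ω + b ⟨t + 1, ht⟩ ω * (1 + r) ^ (t + 1)

/-- Initial wealth of the strategy `(a, b)`. -/
def crrInitialWealth {T : ℕ} (hT : 0 < T) (S0 : ℝ) (a b : Fin T → (Fin T → Bool) → ℝ)
    (ω : Fin T → Bool) : ℝ :=
  a ⟨0, hT⟩ ω * S0 + b ⟨0, hT⟩ ω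

/-- Terminal wealth of the strategy `(a, b)`. -/
def crrTerminalWealth {T : ℕ} (hT : 0 < T) (S0 u d r : ℝ)
    (a b : Fin T → (Fin T → Bool) → ℝ) (ω : Fin T → Bool) : ℝ :=
  a ⟨T - 1, by omega⟩ ω * crrStock T S0 u d T ω + b ⟨T - 1, by omega⟩ ω * (1 + r) ^ T

/-- Number of up-moves in the trajectory `ω`. -/
def crrUps {T : ℕ} (ω : Fin T → Bool) : ℕ :=
  (Finset.univ.filter (fun i : Fin T => ω i = true)).card

namespace CRR

variable {T : ℕ}

/-- Number of up-moves at times `≥ t`. -/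
def U (T t : ℕ) (ω : Fin T → Bool) : ℕ :=
  (univ.filter (fun i : Fin T => t ≤ (i : ℕ) ∧ ω i = true)).card

/-- Value process of the replicating portfolio. -/
noncomputable def V (T : ℕ) (r q : ℝ) (f : (Fin T → Bool) → ℝ) (t : ℕ) (ω : Fin T → Bool) : ℝ :=
  (1 + r) ^ ((t : ℤ) - T) *
    ∑ ω' ∈ univ.filter (fun ω' : Fin T → Bool => ∀ i : Fin T, (i : ℕ) < t → ω' i = ω i),
      f ω' * q ^ (U T t ω') * (1 - q) ^ ((T - t) - U T t ω')

lemma U_le (t : ℕ) (ω : Fin T → Bool) : U T t ω ≤ T - t := by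
  have h : (univ.filter (fun i : Fin T => t ≤ (i : ℕ) ∧ ω i = true)).card
      ≤ (Finset.Ico t T).card := by
    refine Finset.card_le_card_of_injOn (fun i => (i : ℕ)) ?_ ?_
    · intro i hi
      simp only [Finset.mem_coe, mem_filter, mem_univ, true_and] at hi
      simp [Finset.mem_Ico, hi.1, i.isLt]
    · intro i _ j _ h
      exact Fin.ext h
  simpa [U, Nat.card_Ico] using h

lemma U_split (t : ℕ) (ht : t < T) (ω : Fin T → Bool) :
    U T t ω = U T (t + 1) ω + (if ω ⟨t, ht⟩ then 1 else 0) := by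
  classical
  unfold U
  by_cases h : ω ⟨t, ht⟩
  · have : (univ.filter (fun i : Fin T => t ≤ (i : ℕ) ∧ ω i = true))
        = insert ⟨t, ht⟩ (univ.filter (fun i : Fin T => t + 1 ≤ (i : ℕ) ∧ ω i = true)) := by
      ext i
      simp only [mem_filter, mem_univ, true_and, Finset.mem_insert]
      constructor
      · rintro ⟨h1, h2⟩
        rcases eq_or_lt_of_le h1 with h3 | h3
        · left; exact Fin.ext h3.symm
        · right; exact ⟨h3, h2⟩
      · rintro (rfl | ⟨h1, h2⟩)
        · exact ⟨le_refl _, h⟩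
        · exact ⟨by omega, h2⟩
    rw [this, Finset.card_insert_of_notMem (by simp), if_pos h]
  · have : (univ.filter (fun i : Fin T => t ≤ (i : ℕ) ∧ ω i = true))
        = univ.filter (fun i : Fin T => t + 1 ≤ (i : ℕ) ∧ ω i = true) := by
      ext i
      simp only [mem_filter, mem_univ, true_and]
      constructor
      · rintro ⟨h1, h2⟩
        refine ⟨?_, h2⟩
        rcases eq_or_lt_of_le h1 with h3 | h3
        · exact absurd (h3 ▸ h2 : ω ⟨t, ht⟩ = true) (by simpa using h)
        · omega
      · rintro ⟨h1, h2⟩; exact ⟨by omega, h2⟩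
    rw [this, if_neg h]
    omega

lemma V_T (r q : ℝ) (f : (Fin T → Bool) → ℝ) (ω : Fin T → Bool) :
    V T r q f T ω = f ω := by
  have h1 : (univ.filter (fun ω' : Fin T → Bool => ∀ i : Fin T, ω' i = ω i))
      = {ω} := by
    ext ω'
    simp only [mem_filter, mem_univ, true_and, Finset.mem_singleton]
    constructor
    · intro h; funext i; exact h i
    · rintro rfl i; rfl
  have h2 : ∀ σ : Fin T → Bool, U T T σ = 0 := by
    intro σ
    simp only [U, Finset.card_eq_zero]
    ext i
    simp only [mem_filter, mem_univ, true_and, Finset.notMem_empty, iff_false]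
    rintro ⟨hh, _⟩; exact absurd i.isLt (by omega)
  simp [V, h1, h2]

lemma V_congr (r q : ℝ) (f : (Fin T → Bool) → ℝ) (t : ℕ) (ω ω' : Fin T → Bool)
    (h : ∀ i : Fin T, (i : ℕ) < t → ω i = ω' i) :
    V T r q f t ω = V T r q f t ω' := by
  unfold V
  congr 1
  apply Finset.sum_congr _ (fun _ _ => rfl)
  ext σ
  simp only [mem_filter, mem_univ, true_and]
  constructor
  · intro hσ i hi; rw [hσ i hi, h i hi]
  · intro hσ i hi; rw [hσ i hi, h i hi]

lemma V_rec (r q : ℝ) (hr : (1:ℝ) + r ≠ 0) (f : (Fin T → Bool) → ℝ) (t : ℕ) (ht : t < T)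
    (ω : Fin T → Bool) :
    V T r q f t ω = (1 + r)⁻¹ *
      (q * V T r q f (t + 1) (Function.update ω ⟨t, ht⟩ true)
        + (1 - q) * V T r q f (t + 1) (Function.update ω ⟨t, ht⟩ false)) := by
  classical
  set A := univ.filter (fun ω' : Fin T → Bool => ∀ i : Fin T, (i : ℕ) < t → ω' i = ω i) with hA
  have hAb : ∀ b : Bool,
      (univ.filter (fun ω' : Fin T → Bool => ∀ i : Fin T, (i:ℕ) < t + 1 →
          ω' i = Function.update ω ⟨t, ht⟩ b i))
      = A.filter (fun ω' => ω' ⟨t, ht⟩ = b) := by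
    intro b
    ext ω'
    simp only [hA, mem_filter, mem_univ, true_and]
    constructor
    · intro h
      refine ⟨fun i hi => ?_, ?_⟩
      · have h2 := h i (by omega)
        rwa [Function.update_of_ne (Fin.ne_of_val_ne (show (i:ℕ) ≠ t by omega))] at h2
      · have h2 := h ⟨t, ht⟩ (show t < t + 1 by omega)
        rwa [Function.update_self] at h2
    · rintro ⟨h1, h2⟩ i hi
      rcases Nat.lt_or_ge (i : ℕ) t with h3 | h3
      · rw [Function.update_of_ne (Fin.ne_of_val_ne (show (i:ℕ) ≠ t by omega)), h1 i h3]
      · have : i = ⟨t, ht⟩ := Fin.ext (show (i:ℕ) = t by omega)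
        subst this
        rw [Function.update_self, h2]
  have hnot : A.filter (fun ω' => ¬ ω' ⟨t, ht⟩ = true) = A.filter (fun ω' => ω' ⟨t, ht⟩ = false) := by
    simp [Bool.not_eq_true]
  have hkey : ∑ ω' ∈ A, f ω' * q ^ (U T t ω') * (1 - q) ^ ((T - t) - U T t ω')
      = q * ∑ ω' ∈ A.filter (fun ω' => ω' ⟨t, ht⟩ = true),
            f ω' * q ^ (U T (t+1) ω') * (1 - q) ^ ((T - (t+1)) - U T (t+1) ω')
        + (1 - q) * ∑ ω' ∈ A.filter (fun ω' => ω' ⟨t, ht⟩ = false),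
            f ω' * q ^ (U T (t+1) ω') * (1 - q) ^ ((T - (t+1)) - U T (t+1) ω') := by
    rw [← Finset.sum_filter_add_sum_filter_not A (fun ω' => ω' ⟨t, ht⟩ = true), hnot,
      Finset.mul_sum, Finset.mul_sum]
    congr 1
    · apply Finset.sum_congr rfl
      intro ω' hω'
      have hb : ω' ⟨t, ht⟩ = true := (Finset.mem_filter.mp hω').2
      have hu : U T t ω' = U T (t+1) ω' + 1 := by rw [U_split t ht ω', hb]; simp
      have he : (T - t) - (U T (t+1) ω' + 1) = (T - (t+1)) - U T (t+1) ω' := by omega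
      rw [hu, he, pow_succ]
      ring
    · apply Finset.sum_congr rfl
      intro ω' hω'
      have hb : ω' ⟨t, ht⟩ = false := (Finset.mem_filter.mp hω').2
      have hu : U T t ω' = U T (t+1) ω' := by rw [U_split t ht ω', hb]; simp
      have hle := U_le (T := T) (t+1) ω'
      have he : (T - t) - U T (t+1) ω' = ((T - (t+1)) - U T (t+1) ω') + 1 := by omega
      rw [hu, he, pow_succ]
      ring
  have hpow : (1 + r) ^ (((t : ℕ) : ℤ) - T) =
      (1 + r)⁻¹ * (1 + r) ^ ((((t+1 : ℕ)) : ℤ) - T) := by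
    push_cast
    rw [show ((t : ℤ) + 1 - T) = ((t : ℤ) - T) + 1 by ring, zpow_add_one₀ hr]
    field_simp
  rw [V, hkey, V, V, hAb true, hAb false, hpow]
  ring

lemma stock_rec (S0 u d : ℝ) (t : ℕ) (ht : t < T) (ω : Fin T → Bool) :
    crrStock T S0 u d (t + 1) ω
      = crrStock T S0 u d t ω * (if ω ⟨t, ht⟩ then 1 + u else 1 + d) := by
  classical
  have hset : (univ.filter (fun i : Fin T => (i : ℕ) < t + 1))
      = insert ⟨t, ht⟩ (univ.filter (fun i : Fin T => (i : ℕ) < t)) := by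
    ext i
    simp only [mem_filter, mem_univ, true_and, Finset.mem_insert]
    constructor
    · intro h
      rcases Nat.lt_or_ge (i : ℕ) t with h1 | h1
      · right; exact h1
      · left; exact Fin.ext (show (i:ℕ) = t by omega)
    · rintro (rfl | h1)
      · exact Nat.lt_succ_self t
      · omega
  rw [crrStock, hset, Finset.prod_insert (by simp), crrStock]
  ring

lemma stock_congr (S0 u d : ℝ) (t : ℕ) (ω ω' : Fin T → Bool)
    (h : ∀ i : Fin T, (i : ℕ) < t → ω i = ω' i) :
    crrStock T S0 u d t ω = crrStock T S0 u d t ω' := by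
  unfold crrStock
  congr 1
  apply Finset.prod_congr rfl
  intro i hi
  rw [h i (by simpa using hi)]

lemma stock_pos (S0 u d : ℝ) (hS0 : 0 < S0) (hu : 0 < 1 + u) (hd : 0 < 1 + d)
    (t : ℕ) (ω : Fin T → Bool) : 0 < crrStock T S0 u d t ω := by
  apply mul_pos hS0
  apply Finset.prod_pos
  intro i _
  split <;> assumption

lemma stock_zero (S0 u d : ℝ) (ω : Fin T → Bool) : crrStock T S0 u d 0 ω = S0 := by
  have : (univ.filter (fun i : Fin T => (i : ℕ) < 0)) = ∅ := by
    ext i; simp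
  simp [crrStock, this]

/-- Stock holdings of the replicating strategy. -/
noncomputable def astrat (T : ℕ) (S0 u d r q : ℝ) (f : (Fin T → Bool) → ℝ) :
    Fin T → (Fin T → Bool) → ℝ :=
  fun t ω =>
    (V T r q f ((t : ℕ) + 1) (Function.update ω t true)
      - V T r q f ((t : ℕ) + 1) (Function.update ω t false))
      / (crrStock T S0 u d (t : ℕ) ω * (u - d))

/-- Bond holdings of the replicating strategy. -/
noncomputable def bstrat (T : ℕ) (S0 u d r q : ℝ) (f : (Fin T → Bool) → ℝ) :
    Fin T → (Fin T → Bool) → ℝ :=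
  fun t ω =>
    (V T r q f ((t : ℕ) + 1) (Function.update ω t false)
      - astrat T S0 u d r q f t ω * crrStock T S0 u d (t : ℕ) ω * (1 + d))
      / (1 + r) ^ ((t : ℕ) + 1)

end CRR

theorem crr_path_dependent_replication
    (T : ℕ) (hT : 0 < T) (S0 u d r : ℝ) (hS0 : 0 < S0)
    (hd : -1 < d) (hdr : d < r) (hru : r < u)
    (f : (Fin T → Bool) → ℝ) :
    ∃ a b : Fin T → (Fin T → Bool) → ℝ,
      crrPredictable a b ∧ crrSelfFinancing S0 u d r a b ∧
      (∀ ω, crrTerminalWealth hT S0 u d r a b ω = f ω) ∧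
      (∀ ω, crrInitialWealth hT S0 a b ω =
        (1 + r) ^ (-(T : ℤ)) * ∑ ω' : Fin T → Bool,
          f ω' * ((r - d) / (u - d)) ^ crrUps ω'
            * (1 - (r - d) / (u - d)) ^ (T - crrUps ω')) := by
  classical
  set q : ℝ := (r - d) / (u - d) with hq
  have hr0 : (0:ℝ) < 1 + r := by linarith
  have hr1 : (1:ℝ) + r ≠ 0 := ne_of_gt hr0
  have hd0 : (0:ℝ) < 1 + d := by linarith
  have hu0 : (0:ℝ) < 1 + u := by linarith
  have hud : u - d ≠ 0 := by intro h; linarith [sub_eq_zero.mp h]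
  have hSpos : ∀ (t : ℕ) (ω : Fin T → Bool), 0 < crrStock T S0 u d t ω :=
    fun t ω => CRR.stock_pos S0 u d hS0 hu0 hd0 t ω
  have hSne : ∀ (t : ℕ) (ω : Fin T → Bool), crrStock T S0 u d t ω ≠ 0 :=
    fun t ω => ne_of_gt (hSpos t ω)
  have branch : ∀ (t : Fin T) (ω : Fin T → Bool) (b : Bool),
      CRR.astrat T S0 u d r q f t ω * (crrStock T S0 u d (t : ℕ) ω * (if b then 1 + u else 1 + d))
        + CRR.bstrat T S0 u d r q f t ω * (1 + r) ^ ((t : ℕ) + 1)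
        = CRR.V T r q f ((t : ℕ) + 1) (Function.update ω t b) := by
    intro t ω b
    have hS := hSne (t : ℕ) ω
    have hp : (1 + r) ^ ((t : ℕ) + 1) ≠ 0 := pow_ne_zero _ hr1
    cases b <;>
    · simp only [CRR.astrat, CRR.bstrat, if_true, Bool.false_eq_true, if_false]
      field_simp
      ring
  have value : ∀ (t : Fin T) (ω : Fin T → Bool),
      CRR.astrat T S0 u d r q f t ω * crrStock T S0 u d (t : ℕ) ω
        + CRR.bstrat T S0 u d r q f t ω * (1 + r) ^ (t : ℕ)
        = CRR.V T r q f (t : ℕ) ω := by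
    intro t ω
    have hS := hSne (t : ℕ) ω
    have hp : (1 + r) ^ ((t : ℕ) + 1) ≠ 0 := pow_ne_zero _ hr1
    rw [CRR.V_rec r q hr1 f (t : ℕ) t.isLt ω]
    simp only [Fin.eta]
    simp only [CRR.astrat, CRR.bstrat, hq]
    field_simp
    ring
  refine ⟨CRR.astrat T S0 u d r q f, CRR.bstrat T S0 u d r q f, ?_, ?_, ?_, ?_⟩
  · -- predictability
    intro t ω ω' h
    have hupd : ∀ (b : Bool) (i : Fin T), (i : ℕ) < (t : ℕ) + 1 →
        Function.update ω t b i = Function.update ω' t b i := by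
      intro b i hi
      by_cases hit : i = t
      · subst hit; simp
      · have hv : (i : ℕ) ≠ (t : ℕ) := fun hh => hit (Fin.ext hh)
        rw [Function.update_of_ne hit, Function.update_of_ne hit]
        exact h i (by omega)
    have ha : CRR.astrat T S0 u d r q f t ω = CRR.astrat T S0 u d r q f t ω' := by
      unfold CRR.astrat
      rw [CRR.V_congr r q f _ _ _ (hupd true), CRR.V_congr r q f _ _ _ (hupd false),
        CRR.stock_congr S0 u d _ _ _ h]
    have hb : CRR.bstrat T S0 u d r q f t ω = CRR.bstrat T S0 u d r q f t ω' := by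
      unfold CRR.bstrat
      rw [CRR.V_congr r q f _ _ _ (hupd false), CRR.stock_congr S0 u d _ _ _ h, ha]
    exact ⟨ha, hb⟩
  · -- self-financing
    intro t ht ω
    have ht' : t < T := by omega
    have h1 : CRR.astrat T S0 u d r q f ⟨t, ht'⟩ ω
          * (crrStock T S0 u d t ω * (if ω ⟨t, ht'⟩ then 1 + u else 1 + d))
          + CRR.bstrat T S0 u d r q f ⟨t, ht'⟩ ω * (1 + r) ^ (t + 1)
        = CRR.V T r q f (t + 1) ω := by
      have := branch ⟨t, ht'⟩ ω (ω ⟨t, ht'⟩)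
      rwa [Function.update_eq_self] at this
    have h2 : CRR.astrat T S0 u d r q f ⟨t + 1, ht⟩ ω * crrStock T S0 u d (t + 1) ω
          + CRR.bstrat T S0 u d r q f ⟨t + 1, ht⟩ ω * (1 + r) ^ (t + 1)
        = CRR.V T r q f (t + 1) ω := value ⟨t + 1, ht⟩ ω
    have hst := CRR.stock_rec (T := T) S0 u d t ht' ω
    rw [hst] at h2
    show CRR.astrat T S0 u d r q f ⟨t, ht'⟩ ω * crrStock T S0 u d (t + 1) ω
          + CRR.bstrat T S0 u d r q f ⟨t, ht'⟩ ω * (1 + r) ^ (t + 1)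
        = CRR.astrat T S0 u d r q f ⟨t + 1, ht⟩ ω * crrStock T S0 u d (t + 1) ω
          + CRR.bstrat T S0 u d r q f ⟨t + 1, ht⟩ ω * (1 + r) ^ (t + 1)
    rw [hst, h1, h2]
  · -- terminal wealth
    intro ω
    have hm : T - 1 < T := by omega
    have e : T - 1 + 1 = T := by omega
    have h1 : CRR.astrat T S0 u d r q f ⟨T - 1, hm⟩ ω
          * (crrStock T S0 u d (T - 1) ω * (if ω ⟨T - 1, hm⟩ then 1 + u else 1 + d))
          + CRR.bstrat T S0 u d r q f ⟨T - 1, hm⟩ ω * (1 + r) ^ (T - 1 + 1)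
        = CRR.V T r q f (T - 1 + 1) ω := by
      have := branch ⟨T - 1, hm⟩ ω (ω ⟨T - 1, hm⟩)
      rwa [Function.update_eq_self] at this
    rw [e] at h1
    have hst := CRR.stock_rec (T := T) S0 u d (T - 1) hm ω
    rw [e] at hst
    show CRR.astrat T S0 u d r q f ⟨T - 1, hm⟩ ω * crrStock T S0 u d T ω
          + CRR.bstrat T S0 u d r q f ⟨T - 1, hm⟩ ω * (1 + r) ^ T = f ω
    rw [hst, h1, CRR.V_T]
  · -- initial wealth
    intro ω
    have h0 : CRR.astrat T S0 u d r q f ⟨0, hT⟩ ω * crrStock T S0 u d 0 ω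
          + CRR.bstrat T S0 u d r q f ⟨0, hT⟩ ω * (1 + r) ^ (0 : ℕ)
        = CRR.V T r q f 0 ω := value ⟨0, hT⟩ ω
    rw [CRR.stock_zero, pow_zero, mul_one] at h0
    show CRR.astrat T S0 u d r q f ⟨0, hT⟩ ω * S0 + CRR.bstrat T S0 u d r q f ⟨0, hT⟩ ω
        = (1 + r) ^ (-(T : ℤ)) * ∑ ω' : Fin T → Bool,
            f ω' * q ^ crrUps ω' * (1 - q) ^ (T - crrUps ω')
    rw [h0, CRR.V]
    have hfil : (univ.filter (fun ω' : Fin T → Bool => ∀ i : Fin T, (i : ℕ) < 0 → ω' i = ω i))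
        = univ := by
      ext ω'; simp
    have hU : ∀ ω' : Fin T → Bool, CRR.U T 0 ω' = crrUps ω' := by
      intro ω'
      unfold CRR.U crrUps
      congr 1
      ext i
      simp
    rw [hfil]
    have : ((0 : ℕ) : ℤ) - T = -(T : ℤ) := by simp
    rw [this]
    congr 1
    apply Finset.sum_congr rfl
    intro ω' _
    rw [hU ω', Nat.sub_zero]
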